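/- For c = 2√2 − 2 and all real x ≥ 3, c^{x+1}·(1 − 1/(x+1))^{x+1} ≤ c^x·(1 − 1/x)^x. -/

import Mathlib

theorem stmt_0 (c : ℝ) (hc : c = 2 * Real.sqrt 2 - 2) (x : ℝ) (hx : 3 ≤ x) :
    c ^ (x + 1) * (1 - 1 / (x + 1)) ^ (x + 1) ≤ c ^ x * (1 - 1 / x) ^ x := by
  have hs2 : Real.sqrt 2 ^ 2 = 2 := Real.sq_sqrt (by norm_num)
  have hs2n : 0 ≤ Real.sqrt 2 := Real.sqrt_nonneg 2
  have hcpos : 0 < c := by nlinarith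
  have hc56 : c ≤ 5/6 := by nlinarith
  have hx0 : (0:ℝ) < x := by linarith
  have hx1 : (0:ℝ) < x + 1 := by linarith
  have ha : (0:ℝ) < 1 - 1/x := by
    rw [sub_pos, div_lt_one hx0]; linarith
  have hb : (0:ℝ) < 1 - 1/(x+1) := by
    rw [sub_pos, div_lt_one hx1]; linarith
  set a := 1 - 1/x with hadef
  set b := 1 - 1/(x+1) with hbdef
  have hy : (0:ℝ) < 1 - 1/x^2 := by
    rw [sub_pos, div_lt_one (by positivity)]; nlinarith
  set y := 1 - 1/x^2 with hydef
  have hx21 : (0:ℝ) < x^2 - 1 := by nlinarith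
  -- lower bound on x * log y
  have hlogy : -(x/(x^2-1)) ≤ x * Real.log y := by
    have h1 : Real.log (1/y) ≤ 1/y - 1 := Real.log_le_sub_one_of_pos (by positivity)
    have h2 : Real.log y = - Real.log (1/y) := by
      rw [Real.log_div one_ne_zero (ne_of_gt hy), Real.log_one]; ring
    have h3 : 1 - 1/y ≤ Real.log y := by rw [h2]; linarith
    have h5 : 1 - 1/y = -(1/(x^2-1)) := by
      rw [hydef]; field_simp; ring
    have h6 : -(1/(x^2-1)) ≤ Real.log y := by rw [← h5]; exact h3
    calc -(x/(x^2-1)) = x * (-(1/(x^2-1))) := by ring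
    _ ≤ x * Real.log y := mul_le_mul_of_nonneg_left h6 (le_of_lt hx0)
  have hyx : 1 - x/(x^2-1) ≤ y ^ x := by
    rw [Real.rpow_def_of_pos hy]
    calc 1 - x/(x^2-1) = -(x/(x^2-1)) + 1 := by ring
    _ ≤ Real.exp (-(x/(x^2-1))) := Real.add_one_le_exp _
    _ ≤ Real.exp (Real.log y * x) := Real.exp_le_exp.mpr (by rw [mul_comm]; exact hlogy)
  -- key inequality
  have hkey : c ≤ y ^ x * ((x+1)/x) := by
    have hne1 : x ≠ 0 := ne_of_gt hx0
    have hne2 : x^2 - 1 ≠ 0 := ne_of_gt hx21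
    have hne3 : x^2 - x ≠ 0 := by nlinarith
    have heq : (1 - x/(x^2-1)) * ((x+1)/x) = 1 - 1/(x^2-x) := by
      have hne4 : x - 1 ≠ 0 := by intro h; linarith
      field_simp
      ring
    have h7 : (5:ℝ)/6 ≤ 1 - 1/(x^2-x) := by
      have h8 : (6:ℝ) ≤ x^2 - x := by nlinarith
      have h9 : (1:ℝ)/(x^2-x) ≤ 1/6 := by
        apply one_div_le_one_div_of_le (by norm_num) h8
      linarith
    calc c ≤ 5/6 := hc56
    _ ≤ 1 - 1/(x^2-x) := h7
    _ = (1 - x/(x^2-1)) * ((x+1)/x) := heq.symm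
    _ ≤ y^x * ((x+1)/x) := mul_le_mul_of_nonneg_right hyx (by positivity)
  -- algebraic identities
  have hyb : y * b = a := by
    rw [hydef, hbdef, hadef]; field_simp; ring
  have hprod : y^x * ((x+1)/x) * b^(x+1) = a^x := by
    rw [Real.rpow_add_one (ne_of_gt hb) x, ← hyb,
      Real.mul_rpow (le_of_lt hy) (le_of_lt hb)]
    have hb1 : ((x+1)/x) * b = 1 := by
      rw [hbdef]; field_simp; ring
    calc y^x * ((x+1)/x) * (b^x * b) = (y^x * b^x) * (((x+1)/x) * b) := by ring
    _ = y^x * b^x := by rw [hb1, mul_one]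
  -- finish
  have hmain : c * b^(x+1) ≤ a^x := by
    calc c * b^(x+1) ≤ (y^x * ((x+1)/x)) * b^(x+1) :=
      mul_le_mul_of_nonneg_right hkey (le_of_lt (Real.rpow_pos_of_pos hb _))
    _ = a^x := hprod
  have hfin : c ^ (x+1) * b^(x+1) = c^x * (c * b^(x+1)) := by
    rw [Real.rpow_add_one (ne_of_gt hcpos) x]; ring
  rw [hfin]
  exact mul_le_mul_of_nonneg_left hmain (le_of_lt (Real.rpow_pos_of_pos hcpos _))
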